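/- Let H be a Hilbert space and X a closed subspace of B(H) containing the identity I, and let v ∈ X be a unitary operator on H. Suppose that for every y ∈ X with ‖y‖ ≤ 1 and every t > 0, inf{ ‖[[t·I, y],[z, t·v]]‖ : z ∈ X, ‖z‖ ≤ 1 } ≤ √(t² + 1). Then v y* ∈ X for every y ∈ X, i.e. v X* ⊆ X. -/

import Mathlib

open ContinuousLinearMap in
/-- The block operator `[[a, b], [c, d]]` on the Hilbert space `H ⊕₂ H`,
realizing the canonical C*-norm on `M₂(B(H))`. -/
noncomputable def blockOp {H : Type*} [NormedAddCommGroup H] [InnerProductSpace ℂ H]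
    (a b c d : H →L[ℂ] H) : WithLp 2 (H × H) →L[ℂ] WithLp 2 (H × H) :=
  (((WithLp.prodContinuousLinearEquiv 2 ℂ H H).symm : H × H →L[ℂ] WithLp 2 (H × H)).comp
    ((a.comp (fst ℂ H H) + b.comp (snd ℂ H H)).prod
      (c.comp (fst ℂ H H) + d.comp (snd ℂ H H)))).comp
    ((WithLp.prodContinuousLinearEquiv 2 ℂ H H) : WithLp 2 (H × H) →L[ℂ] H × H)

open scoped InnerProductSpace in
section
variable {H : Type*} [NormedAddCommGroup H] [InnerProductSpace ℂ H]

lemma blockOp_norm_sq (a b c d : H →L[ℂ] H) (ξ η : H) :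
    ‖blockOp a b c d ((WithLp.prodContinuousLinearEquiv 2 ℂ H H).symm (ξ, η))‖ ^ 2
      = ‖a ξ + b η‖ ^ 2 + ‖c ξ + d η‖ ^ 2 := by
  rw [WithLp.prod_norm_sq_eq_of_L2]
  simp [blockOp]

lemma withLp_norm_sq (ξ η : H) :
    ‖(WithLp.prodContinuousLinearEquiv 2 ℂ H H).symm (ξ, η)‖ ^ 2 = ‖ξ‖ ^ 2 + ‖η‖ ^ 2 := by
  rw [WithLp.prod_norm_sq_eq_of_L2]
  simp

lemma core [CompleteSpace H] (v y z : H →L[ℂ] H) (hv : star v * v = 1)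
    (t K : ℝ) (ht : 0 < t) (htK : t ≤ K)
    (hM : ‖blockOp ((t : ℂ) • 1) y z ((t : ℂ) • v)‖ ≤ K) :
    ‖y + star z * v‖ ≤ (K ^ 2 - t ^ 2) / t := by
  set w := y + star z * v with hw
  have hK2 : t ^ 2 ≤ K ^ 2 := by nlinarith
  have hC : 0 ≤ (K ^ 2 - t ^ 2) / t := div_nonneg (by linarith) ht.le
  refine ContinuousLinearMap.opNorm_le_bound _ hC (fun η => ?_)
  rcases eq_or_ne (w η) 0 with h0 | h0
  · rw [h0, norm_zero]; positivity
  · have hwη : 0 < ‖w η‖ := norm_pos_iff.mpr h0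
    have hη : 0 < ‖η‖ := by
      rcases eq_or_ne η 0 with rfl | hne
      · simp at h0
      · exact norm_pos_iff.mpr hne
    set c : ℂ := ((‖η‖ / ‖w η‖ : ℝ) : ℂ) with hc
    have hξ : ‖c • w η‖ = ‖η‖ := by
      rw [norm_smul, hc, Complex.norm_real, Real.norm_eq_abs,
        abs_of_nonneg (by positivity), div_mul_cancel₀ _ hwη.ne']
    -- norm of v η
    have hvη : ‖v η‖ ^ 2 = ‖η‖ ^ 2 := by
      have h1 : ⟪v η, v η⟫_ℂ = ⟪η, η⟫_ℂ := by
        rw [← ContinuousLinearMap.adjoint_inner_left v η (v η),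
          ← ContinuousLinearMap.star_eq_adjoint]
        have h2 : star v (v η) = (star v * v) η := rfl
        rw [h2, hv]; simp
      rw [← inner_self_eq_norm_sq (𝕜 := ℂ), ← inner_self_eq_norm_sq (𝕜 := ℂ), h1]
    -- the bound from the operator norm
    have hp1 : ‖blockOp ((t : ℂ) • 1) y z ((t : ℂ) • v)
          ((WithLp.prodContinuousLinearEquiv 2 ℂ H H).symm (c • w η, η))‖ ^ 2
        ≤ K ^ 2 * (‖c • w η‖ ^ 2 + ‖η‖ ^ 2) := by
      set p := (WithLp.prodContinuousLinearEquiv 2 ℂ H H).symm (c • w η, η) with hpdef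
      have h2 := (blockOp ((t : ℂ) • 1) y z ((t : ℂ) • v)).le_opNorm p
      have h3 : ‖blockOp ((t : ℂ) • 1) y z ((t : ℂ) • v) p‖ ≤ K * ‖p‖ :=
        h2.trans (by gcongr)
      have h4 : ‖p‖ ^ 2 = ‖c • w η‖ ^ 2 + ‖η‖ ^ 2 := withLp_norm_sq _ η
      have h5 : (0 : ℝ) ≤ K := ht.le.trans htK
      nlinarith [norm_nonneg (blockOp ((t : ℂ) • 1) y z ((t : ℂ) • v) p), norm_nonneg p,
        mul_nonneg h5 (norm_nonneg p)]
    rw [blockOp_norm_sq] at hp1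
    have ha : ((t : ℂ) • (1 : H →L[ℂ] H)) (c • w η) = (t : ℂ) • (c • w η) := by
      rw [ContinuousLinearMap.smul_apply, ContinuousLinearMap.one_apply]
    have hd : ((t : ℂ) • v) η = (t : ℂ) • v η := by simp
    rw [ha, hd] at hp1
    -- expand the two norms
    have e1 : ‖(t : ℂ) • (c • w η) + y η‖ ^ 2
        = t ^ 2 * ‖η‖ ^ 2 + 2 * (t * Complex.re ⟪c • w η, y η⟫_ℂ) + ‖y η‖ ^ 2 := by
      rw [norm_add_sq (𝕜 := ℂ), inner_smul_left]
      simp only [Complex.conj_ofReal, RCLike.re_to_complex]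
      rw [Complex.re_ofReal_mul, norm_smul (t : ℂ), Complex.norm_real, Real.norm_eq_abs,
        abs_of_nonneg ht.le, mul_pow, hξ]
    have e2 : ‖z (c • w η) + (t : ℂ) • v η‖ ^ 2
        = ‖z (c • w η)‖ ^ 2 + 2 * (t * Complex.re ⟪z (c • w η), v η⟫_ℂ) + t ^ 2 * ‖η‖ ^ 2 := by
      rw [norm_add_sq (𝕜 := ℂ), inner_smul_right]
      simp only [RCLike.re_to_complex]
      rw [Complex.re_ofReal_mul, norm_smul (t : ℂ), Complex.norm_real, Real.norm_eq_abs,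
        abs_of_nonneg ht.le, mul_pow, hvη]
    -- the cross term
    have hcross : Complex.re ⟪c • w η, y η⟫_ℂ + Complex.re ⟪z (c • w η), v η⟫_ℂ
        = ‖η‖ * ‖w η‖ := by
      rw [← Complex.add_re]
      have h5 : ⟪z (c • w η), v η⟫_ℂ = ⟪c • w η, (star z) (v η)⟫_ℂ := by
        rw [ContinuousLinearMap.star_eq_adjoint, ContinuousLinearMap.adjoint_inner_right]
      have h6 : ⟪c • w η, y η⟫_ℂ + ⟪c • w η, (star z) (v η)⟫_ℂ = ⟪c • w η, w η⟫_ℂ := by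
        rw [← inner_add_right]; rfl
      have h7 : ⟪c • w η, w η⟫_ℂ = (starRingEnd ℂ) c * ⟪w η, w η⟫_ℂ :=
        inner_smul_left _ _ _
      rw [h5, h6, h7, hc, Complex.conj_ofReal]
      rw [Complex.re_ofReal_mul]
      have h8 : (⟪w η, w η⟫_ℂ).re = ‖w η‖ ^ 2 := inner_self_eq_norm_sq (𝕜 := ℂ) (w η)
      rw [h8]
      field_simp
    -- combine
    have key : t * ‖w η‖ ≤ (K ^ 2 - t ^ 2) * ‖η‖ := by
      rw [e1, e2, hξ] at hp1
      nlinarith [sq_nonneg (‖z (c • w η)‖), sq_nonneg (‖y η‖), mul_pos hη hwη]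
    rw [div_mul_eq_mul_div, le_div_iff₀ ht, mul_comm (‖w η‖) t]
    linarith [key]
end


set_option maxHeartbeats 1000000 in
/-- If `X` is a closed unital subspace of `B(H)`, `v ∈ X` is a unitary, and for each
contraction `y ∈ X` and `t > 0`,
`inf { ‖[[t·I, y], [z, t·v]]‖ : z ∈ X, ‖z‖ ≤ 1 } ≤ √(t² + 1)`, then `v X* ⊆ X`. -/
theorem stmt15 {H : Type*} [NormedAddCommGroup H] [InnerProductSpace ℂ H] [CompleteSpace H]
    (X : Submodule ℂ (H →L[ℂ] H)) (hX : IsClosed (X : Set (H →L[ℂ] H)))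
    (h1 : (1 : H →L[ℂ] H) ∈ X)
    (v : H →L[ℂ] H) (hv : v ∈ unitary (H →L[ℂ] H)) (hvX : v ∈ X)
    (h : ∀ y ∈ X, ‖y‖ ≤ 1 → ∀ t : ℝ, 0 < t →
      sInf {r : ℝ | ∃ z ∈ X, ‖z‖ ≤ 1 ∧ r = ‖blockOp ((t : ℂ) • 1) y z ((t : ℂ) • v)‖}
        ≤ Real.sqrt (t ^ 2 + 1)) :
    ∀ y ∈ X, v * star y ∈ X := by
  have hvv : star v * v = 1 := hv.1
  have hvv' : v * star v = 1 := hv.2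
  have hnv : ‖v‖ ≤ 1 := by
    have h2 : ‖star v * v‖ = ‖v‖ * ‖v‖ := CStarRing.norm_star_mul_self
    rw [hvv] at h2
    have h3 : ‖(1 : H →L[ℂ] H)‖ ≤ 1 := by
      rw [ContinuousLinearMap.one_def]; exact ContinuousLinearMap.norm_id_le
    nlinarith [norm_nonneg v]
  have key : ∀ y ∈ X, ‖y‖ ≤ 1 → v * star y ∈ X := by
    intro y hyX hy1
    have hcl : v * star y ∈ closure (X : Set (H →L[ℂ] H)) := by
      rw [Metric.mem_closure_iff]
      intro δ hδ
      set t : ℝ := max 1 (7 / δ) with htdef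
      have ht1 : (1 : ℝ) ≤ t := le_max_left _ _
      have ht : 0 < t := lt_of_lt_of_le one_pos ht1
      have ht7 : 7 / δ ≤ t := le_max_right _ _
      have hsInf := h y hyX hy1 t ht
      have hS : {r : ℝ | ∃ z ∈ X, ‖z‖ ≤ 1 ∧
          r = ‖blockOp ((t : ℂ) • 1) y z ((t : ℂ) • v)‖}.Nonempty :=
        ⟨_, 0, X.zero_mem, by simp, rfl⟩
      have hlt : sInf {r : ℝ | ∃ z ∈ X, ‖z‖ ≤ 1 ∧
          r = ‖blockOp ((t : ℂ) • 1) y z ((t : ℂ) • v)‖}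
          < Real.sqrt (t ^ 2 + 1) + 1 / t :=
        lt_of_le_of_lt hsInf (by linarith [one_div_pos.mpr ht])
      obtain ⟨r, ⟨z, hzX, hz1, hr⟩, hrlt⟩ := exists_lt_of_csInf_lt hS hlt
      set K : ℝ := Real.sqrt (t ^ 2 + 1) + 1 / t with hKdef
      have hs0 : 0 ≤ Real.sqrt (t ^ 2 + 1) := Real.sqrt_nonneg _
      have hssq : Real.sqrt (t ^ 2 + 1) ^ 2 = t ^ 2 + 1 := Real.sq_sqrt (by positivity)
      have hst : t ≤ Real.sqrt (t ^ 2 + 1) := by nlinarith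
      have htK : t ≤ K := hst.trans (le_add_of_nonneg_right (by positivity))
      have hM : ‖blockOp ((t : ℂ) • 1) y z ((t : ℂ) • v)‖ ≤ K := by
        rw [← hr]; exact hrlt.le
      have hcore := core v y z hvv t K ht htK hM
      have hs_le : Real.sqrt (t ^ 2 + 1) ≤ t + 1 := by nlinarith
      have h6 : K ^ 2 - t ^ 2 ≤ 6 := by
        rw [hKdef]
        have hinv : 1 / t ≤ 1 := by
          rw [div_le_one ht]; exact ht1
        have hinv0 : 0 < 1 / t := one_div_pos.mpr ht
        have h2s : Real.sqrt (t ^ 2 + 1) * (1 / t) ≤ 2 := by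
          calc Real.sqrt (t ^ 2 + 1) * (1 / t) ≤ (t + 1) * (1 / t) :=
                mul_le_mul_of_nonneg_right hs_le hinv0.le
          _ = 1 + 1 / t := by field_simp
          _ ≤ 2 := by linarith
        nlinarith [sq_nonneg (1 / t)]
      have hKt : (K ^ 2 - t ^ 2) / t < δ := by
        have h7 : 7 ≤ δ * t := by
          rw [htdef]
          calc (7 : ℝ) = δ * (7 / δ) := by field_simp
          _ ≤ δ * max 1 (7 / δ) := by
              exact mul_le_mul_of_nonneg_left (le_max_right _ _) hδ.le
        rw [div_lt_iff₀ ht]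
        nlinarith
      have heq : v * star (y + star z * v) = v * star y + z := by
        rw [star_add, star_mul, star_star, mul_add, ← mul_assoc, hvv', one_mul]
      have hnorm : ‖v * star y + z‖ ≤ ‖y + star z * v‖ := by
        calc ‖v * star y + z‖ = ‖v * star (y + star z * v)‖ := by rw [heq]
        _ ≤ ‖v‖ * ‖star (y + star z * v)‖ := norm_mul_le _ _
        _ ≤ 1 * ‖y + star z * v‖ := by
            rw [norm_star]
            exact mul_le_mul_of_nonneg_right hnv (norm_nonneg _)
        _ = ‖y + star z * v‖ := one_mul _
      refine ⟨-z, X.neg_mem hzX, ?_⟩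
      rw [dist_eq_norm, sub_neg_eq_add]
      calc ‖v * star y + z‖ ≤ ‖y + star z * v‖ := hnorm
      _ ≤ (K ^ 2 - t ^ 2) / t := hcore
      _ < δ := hKt
    rwa [hX.closure_eq] at hcl
  intro y hyX
  rcases eq_or_ne y 0 with rfl | hy0
  · simpa using X.zero_mem
  · have hny : 0 < ‖y‖ := norm_pos_iff.mpr hy0
    have h1' : ((‖y‖⁻¹ : ℝ) : ℂ) • y ∈ X := X.smul_mem _ hyX
    have hnorm1 : ‖((‖y‖⁻¹ : ℝ) : ℂ) • y‖ ≤ 1 := by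
      rw [norm_smul, Complex.norm_real, Real.norm_eq_abs, abs_of_nonneg (by positivity),
        inv_mul_cancel₀ hny.ne']
    have hmem := key _ h1' hnorm1
    have heq : v * star (((‖y‖⁻¹ : ℝ) : ℂ) • y)
        = ((‖y‖⁻¹ : ℝ) : ℂ) • (v * star y) := by
      have hstar : star ((((‖y‖⁻¹ : ℝ)) : ℂ) • y) = ((‖y‖⁻¹ : ℝ) : ℂ) • star y := by
        simp [star_smul]
      rw [hstar]
      exact mul_smul_comm ((‖y‖⁻¹ : ℝ) : ℂ) v (star y)
    rw [heq] at hmem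
    have h2 := X.smul_mem ((‖y‖ : ℝ) : ℂ) hmem
    rwa [smul_smul, ← Complex.ofReal_mul, mul_inv_cancel₀ hny.ne', Complex.ofReal_one,
      one_smul] at h2
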